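/- Let K be a compact Hausdorff extremally disconnected space and A ⊆ K a dense subspace. Then K is the Čech–Stone compactification of A; in particular, for every compact Hausdorff space Y, every continuous map g : A → Y extends to a continuous map f : K → Y. -/

import Mathlib

open Filter Topology

lemma extremallyDisconnected_of_homeomorph {X Y : Type*} [TopologicalSpace X]
    [TopologicalSpace Y] [ExtremallyDisconnected X] (e : X ≃ₜ Y) :
    ExtremallyDisconnected Y := by
  constructor
  intro U hU
  have : closure U = e '' closure (e ⁻¹' U) := by
    rw [← e.preimage_closure, e.image_preimage]
  rw [this]
  exact e.isOpen_image.2 (ExtremallyDisconnected.open_closure _ (hU.preimage e.continuous))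

/-- A compact Hausdorff extremally disconnected space is the Čech–Stone
compactification of each of its dense subspaces: every continuous map from a
dense subspace into a compact Hausdorff space extends continuously. -/
theorem compact_extremallyDisconnected_stoneCech_of_dense
    {K : Type*} [TopologicalSpace K] [CompactSpace K] [T2Space K]
    [ExtremallyDisconnected K]
    (A : Set K) (hA : Dense A)
    (Y : Type*) [TopologicalSpace Y] [CompactSpace Y] [T2Space Y]
    (g : A → Y) (hg : Continuous g) :
    ∃ f : K → Y, Continuous f ∧ ∀ a : A, f a = g a := by
  classical
  -- the graph map and its closure
  set e : A → K × Y := fun a => (↑a, g a) with he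
  have he_cont : Continuous e := continuous_subtype_val.prodMk hg
  set G : Set (K × Y) := closure (Set.range e) with hG
  have hGclosed : IsClosed G := isClosed_closure
  haveI : CompactSpace G := isCompact_iff_compactSpace.mp hGclosed.isCompact
  set π : G → K := fun p => (p : K × Y).1 with hπ
  have hπ_cont : Continuous π := continuous_fst.comp continuous_subtype_val
  have hπ_surj : Function.Surjective π := by
    have himg : IsClosed (Set.range π) := (isCompact_range hπ_cont).isClosed
    have hsub : A ⊆ Set.range π := fun x hx =>
      ⟨⟨e ⟨x, hx⟩, subset_closure ⟨⟨x, hx⟩, rfl⟩⟩, rfl⟩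
    intro x
    have : x ∈ closure A := hA x
    have : x ∈ Set.range π := himg.closure_eq ▸ closure_mono hsub this
    exact this
  -- key uniqueness: over a point of A the fiber is a singleton
  have hfiber : ∀ (a : A) (p : G), π p = ↑a → ((p : K × Y)).2 = g a := by
    intro a p hpa
    set y := ((p : K × Y)).2 with hy
    have hpy : ((↑a : K), y) ∈ closure (Set.range e) := by
      rw [← hG, ← hpa]
      exact p.2
    have hne : NeBot (comap e (𝓝 ((↑a : K), y))) := by
      rw [comap_neBot_iff]
      intro U hU
      rcases mem_closure_iff_nhds.mp hpy U hU with ⟨z, hzU, x, hx⟩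
      exact ⟨x, hx ▸ hzU⟩
    have h1 : Tendsto e (comap e (𝓝 ((↑a : K), y))) (𝓝 ((↑a : K), y)) :=
      tendsto_comap
    have hval : Tendsto (fun x : A => (x : K)) (comap e (𝓝 ((↑a : K), y)))
        (𝓝 (↑a : K)) := (continuous_fst.tendsto _).comp h1
    have hid : Tendsto (id : A → A) (comap e (𝓝 ((↑a : K), y))) (𝓝 a) := by
      rw [Topology.IsEmbedding.subtypeVal.tendsto_nhds_iff]
      exact hval
    have h2 : Tendsto g (comap e (𝓝 ((↑a : K), y))) (𝓝 (g a)) :=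
      (hg.tendsto a).comp hid
    have h3 : Tendsto g (comap e (𝓝 ((↑a : K), y))) (𝓝 y) :=
      (continuous_snd.tendsto _).comp h1
    exact tendsto_nhds_unique h3 h2
  -- use projectivity of K (after lifting universes)
  haveI : ExtremallyDisconnected (ULift.{_} K) :=
    extremallyDisconnected_of_homeomorph Homeomorph.ulift.symm
  haveI : T2Space (ULift.{_} K) := Homeomorph.ulift.isEmbedding.t2Space
  have hproj := CompactT2.ExtremallyDisconnected.projective (A := ULift.{_} K)
    (f := fun x : ULift.{_} K => ULift.up.{_} x.down)
    (g := fun p : G => ULift.up.{_} (π p))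
    (Homeomorph.ulift.symm.continuous.comp Homeomorph.ulift.continuous)
    (continuous_uliftUp.comp hπ_cont)
    (fun z => by
      obtain ⟨p, hp⟩ := hπ_surj z.down
      exact ⟨p, congrArg ULift.up hp⟩)
  obtain ⟨h, h_cont, hcomm⟩ := hproj
  refine ⟨fun x => ((h (ULift.up x) : K × Y)).2, ?_, ?_⟩
  · exact continuous_snd.comp (continuous_subtype_val.comp
      (h_cont.comp continuous_uliftUp))
  · intro a
    apply hfiber a
    have := congrFun hcomm (ULift.up (a : K))
    exact congrArg ULift.down this
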